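/- Real one-variable Cauchy approximation: Let f : ℝ → ℝ be real-analytic on an open set Ω ⊆ ℝ and let K ⊆ Ω be compact. Then for every ε > 0 there exist a natural number m ≥ 1, complex numbers ξ_1, …, ξ_m ∈ ℂ each with strictly positive imaginary part, and complex parameters λ_1, …, λ_m ∈ ℂ such that for every x ∈ K, |f(x) − Re(∑_{k=1}^m λ_k / (ξ_k − x))| < ε. -/

import Mathlib

set_option synthInstance.maxHeartbeats 1000000
set_option maxHeartbeats 1000000

namespace CauchyApprox

open Complex

lemma denom_ne (ξ : ℂ) (x : ℝ) (h : ξ.im ≠ 0) : ξ - (x:ℂ) ≠ 0 := by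
  intro h0
  apply h
  have : (ξ - (x:ℂ)).im = 0 := by rw [h0]; simp
  simpa [Complex.sub_im] using this

lemma re_mul_re (a b : ℂ) : a.re * b.re = ((a*b).re + (a * (starRingEnd ℂ) b).re)/2 := by
  simp [Complex.mul_re, Complex.conj_re, Complex.conj_im]

lemma re_div_two (z : ℂ) : (z/2).re = z.re/2 := by
  simp [Complex.div_re, Complex.normSq_apply]

lemma re_reflect (c η : ℂ) (x : ℝ) :
    (c/((starRingEnd ℂ) η - x)).re = (((starRingEnd ℂ) c)/(η - x)).re := by
  rw [← Complex.conj_re (c/((starRingEnd ℂ) η - x))]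
  congr 1
  simp [map_div₀, map_sub, Complex.conj_ofReal]

lemma partial_frac (c ξ η : ℂ) (x : ℝ) (hu : ξ - (x:ℂ) ≠ 0) (hv : η - (x:ℂ) ≠ 0)
    (hne : η - ξ ≠ 0) :
    c/((ξ-x)*(η-x)) = (c/(η-ξ))/(ξ-x) + (-(c/(η-ξ)))/(η-x) := by
  field_simp
  ring

variable (K : Set ℝ)

def kernelSet : Set C(K, ℝ) :=
  {g | ∃ m : ℕ, ∃ ξ : Fin m → ℂ, ∃ lam : Fin m → ℂ, (∀ k, 0 < (ξ k).im) ∧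
    ∀ x : K, g x = (∑ k, lam k / (ξ k - ((x:ℝ):ℂ))).re}

noncomputable def kernelFun (ξ lam : ℂ) (h : 0 < ξ.im) : C(K, ℝ) :=
  ⟨fun x => (lam / (ξ - ((x:ℝ):ℂ))).re,
    Complex.continuous_re.comp <| Continuous.div continuous_const
      (continuous_const.sub (Complex.continuous_ofReal.comp continuous_subtype_val))
      (fun x => denom_ne ξ x h.ne')⟩

lemma kernelFun_apply (ξ lam : ℂ) (h : 0 < ξ.im) (x : K) :
    kernelFun K ξ lam h x = (lam / (ξ - ((x:ℝ):ℂ))).re := rfl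

lemma kernelFun_mem (ξ lam : ℂ) (h : 0 < ξ.im) : kernelFun K ξ lam h ∈ kernelSet K :=
  ⟨1, fun _ => ξ, fun _ => lam, fun _ => h, fun x => by simp [kernelFun]⟩

lemma zero_mem : (0 : C(K, ℝ)) ∈ kernelSet K :=
  ⟨0, Fin.elim0, Fin.elim0, fun k => k.elim0, fun x => by simp⟩

lemma add_mem {g h : C(K, ℝ)} (hg : g ∈ kernelSet K) (hh : h ∈ kernelSet K) :
    g + h ∈ kernelSet K := by
  obtain ⟨m, ξ, lam, him, hgx⟩ := hg
  obtain ⟨n, η, mu, him', hhx⟩ := hh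
  refine ⟨m + n, Fin.append ξ η, Fin.append lam mu, ?_, ?_⟩
  · intro k
    refine Fin.addCases (fun i => ?_) (fun i => ?_) k <;> simp [him, him']
  · intro x
    rw [Fin.sum_univ_add (f := fun k : Fin (m+n) =>
      Fin.append lam mu k / (Fin.append ξ η k - ((x:ℝ):ℂ)))]
    simp [Fin.append_left, Fin.append_right, hgx, hhx, Complex.add_re]

lemma mem_iff_sum {g : C(K, ℝ)} (hg : g ∈ kernelSet K) :
    ∃ m : ℕ, ∃ ξ : Fin m → ℂ, ∃ lam : Fin m → ℂ, ∃ h : ∀ k, 0 < (ξ k).im,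
      g = ∑ k, kernelFun K (ξ k) (lam k) (h k) := by
  obtain ⟨m, ξ, lam, him, hgx⟩ := hg
  exact ⟨m, ξ, lam, him, by
    ext x
    simp [hgx, ContinuousMap.sum_apply, kernelFun_apply, Complex.re_sum]⟩

section Closure

lemma closure_add {g h : C(K, ℝ)} (hg : g ∈ closure (kernelSet K))
    (hh : h ∈ closure (kernelSet K)) : g + h ∈ closure (kernelSet K) := by
  have hp : (g, h) ∈ closure (kernelSet K ×ˢ kernelSet K) := by
    rw [closure_prod_eq]; exact ⟨hg, hh⟩
  have hcont : Continuous (fun p : C(K, ℝ) × C(K, ℝ) => p.1 + p.2) := continuous_add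
  have hm : (fun p : C(K, ℝ) × C(K, ℝ) => p.1 + p.2) (g, h) ∈
      closure ((fun p : C(K, ℝ) × C(K, ℝ) => p.1 + p.2) '' (kernelSet K ×ˢ kernelSet K)) :=
    image_closure_subset_closure_image hcont ⟨(g, h), hp, rfl⟩
  refine closure_minimal ?_ isClosed_closure hm
  rintro _ ⟨⟨a, b⟩, ⟨ha, hb⟩, rfl⟩
  exact subset_closure (add_mem K ha hb)

lemma closure_sum {ι : Type*} (t : Finset ι) (F : ι → C(K, ℝ))
    (hF : ∀ i ∈ t, F i ∈ closure (kernelSet K)) : (∑ i ∈ t, F i) ∈ closure (kernelSet K) :=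
  Finset.sum_induction F (· ∈ closure (kernelSet K))
    (fun _ _ ha hb => closure_add K ha hb) (subset_closure (zero_mem K)) hF

variable [CompactSpace K]

lemma const_mem_closure (c : ℝ) :
    (ContinuousMap.const K c) ∈ closure (kernelSet K) := by
  obtain ⟨M, hM1, hM⟩ : ∃ M : ℝ, 1 ≤ M ∧ ∀ x : K, |(x:ℝ)| ≤ M := by
    obtain ⟨M, hM⟩ :=
      (isCompact_iff_compactSpace.mpr ‹_› : IsCompact K).isBounded.subset_closedBall 0
    exact ⟨max M 1, le_max_right _ _, fun x => by
      have := hM x.2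
      simp [Metric.mem_closedBall, Real.dist_eq] at this
      exact this.trans (le_max_left _ _)⟩
  rw [Metric.mem_closure_iff]
  intro ε hε
  set R : ℝ := (|c| * M + 1) / ε with hR
  have hRpos : 0 < R := by positivity
  have him : (0:ℝ) < (Complex.I * (R:ℂ)).im := by simp [hRpos]
  refine ⟨kernelFun K (Complex.I * R) ((c:ℂ) * (Complex.I * R)) him,
    kernelFun_mem K _ _ _, ?_⟩
  rw [ContinuousMap.dist_lt_iff hε]
  intro x
  have hden : (Complex.I * (R:ℂ) - ((x:ℝ):ℂ)) ≠ 0 := denom_ne _ _ (by simp [hRpos.ne'])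
  have key : (ContinuousMap.const K c) x - kernelFun K (Complex.I * R) ((c:ℂ) * (Complex.I * R)) him x
      = ((-(c : ℂ) * (x:ℝ)) / (Complex.I * R - ((x:ℝ):ℂ))).re := by
    rw [kernelFun_apply]
    have h2 : ((c:ℂ)) - ((c:ℂ) * (Complex.I * R)) / (Complex.I * R - ((x:ℝ):ℂ))
        = (-(c : ℂ) * (x:ℝ)) / (Complex.I * R - ((x:ℝ):ℂ)) := by
      field_simp
      ring
    rw [← h2, Complex.sub_re, Complex.ofReal_re]
    rfl
  rw [Real.dist_eq, key]
  have h3 : |((-(c : ℂ) * (x:ℝ)) / (Complex.I * R - ((x:ℝ):ℂ))).re|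
      ≤ ‖((-(c : ℂ) * (x:ℝ)) / (Complex.I * R - ((x:ℝ):ℂ)))‖ :=
    Complex.abs_re_le_norm _
  have h4 : ‖((-(c : ℂ) * (x:ℝ)) / (Complex.I * R - ((x:ℝ):ℂ)))‖
      = |c| * |(x:ℝ)| / ‖(Complex.I * R - ((x:ℝ):ℂ))‖ := by
    rw [norm_div, norm_mul]
    simp
  have h5 : R ≤ ‖(Complex.I * R - ((x:ℝ):ℂ))‖ := by
    have := Complex.abs_im_le_norm (Complex.I * R - ((x:ℝ):ℂ))
    simpa [abs_of_pos hRpos] using this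
  have h6 : |c| * |(x:ℝ)| / ‖(Complex.I * R - ((x:ℝ):ℂ))‖ ≤ |c| * M / R := by
    gcongr
    exact hM x
  have hεR : ε * R = |c| * M + 1 := by
    rw [hR]; field_simp
  have h7 : |c| * M / R < ε := by
    rw [div_lt_iff₀ hRpos]
    nlinarith [abs_nonneg c]
  calc |((-(c : ℂ) * (x:ℝ)) / (Complex.I * R - ((x:ℝ):ℂ))).re| ≤ _ := h3
    _ = _ := h4
    _ ≤ |c| * M / R := h6
    _ < ε := h7

end Closure

end CauchyApprox

namespace CauchyApprox
open Complex
variable (K : Set ℝ)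

noncomputable def sqKernelFun (ξ c : ℂ) (h : 0 < ξ.im) : C(K, ℝ) :=
  ⟨fun x => (c / ((ξ - ((x:ℝ):ℂ))^2)).re,
    Complex.continuous_re.comp <| Continuous.div continuous_const
      ((continuous_const.sub (Complex.continuous_ofReal.comp continuous_subtype_val)).pow 2)
      (fun x => pow_ne_zero _ (denom_ne ξ x h.ne'))⟩

lemma sqKernelFun_apply (ξ c : ℂ) (h : 0 < ξ.im) (x : K) :
    sqKernelFun K ξ c h x = (c / ((ξ - ((x:ℝ):ℂ))^2)).re := rfl

lemma sq_mem_closure [CompactSpace K] (ξ c : ℂ) (h : 0 < ξ.im) :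
    sqKernelFun K ξ c h ∈ closure (kernelSet K) := by
  rw [Metric.mem_closure_iff]
  intro ε hε
  set b : ℝ := ξ.im with hb
  have hbpos : 0 < b := h
  set A : ℝ := ‖c‖ with hA
  have hApos : 0 < A + 1 := by positivity
  set δ : ℝ := ε * b^3 / (A + 1) with hδ
  have hδpos : 0 < δ := div_pos (mul_pos hε (pow_pos hbpos 3)) hApos
  set ξ' : ℂ := ξ + Complex.I * δ with hξ'
  have him' : 0 < ξ'.im := by
    simp only [hξ', Complex.add_im, Complex.mul_im, Complex.I_re, Complex.I_im,
      Complex.ofReal_re, Complex.ofReal_im]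
    nlinarith
  have hIδ : (Complex.I * (δ:ℂ)) ≠ 0 := by
    simp [Complex.I_ne_zero, Complex.ofReal_ne_zero, hδpos.ne']
  set d : ℂ := c / (Complex.I * δ) with hd
  refine ⟨kernelFun K ξ d h + kernelFun K ξ' (-d) him',
    add_mem K (kernelFun_mem K _ _ _) (kernelFun_mem K _ _ _), ?_⟩
  rw [ContinuousMap.dist_lt_iff hε]
  intro x
  have hu : ξ - ((x:ℝ):ℂ) ≠ 0 := denom_ne _ _ h.ne'
  have hv : ξ' - ((x:ℝ):ℂ) ≠ 0 := denom_ne _ _ him'.ne'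
  have keyc : d/(ξ - ((x:ℝ):ℂ)) + (-d)/(ξ' - ((x:ℝ):ℂ)) = c/((ξ - ((x:ℝ):ℂ))*(ξ' - ((x:ℝ):ℂ))) := by
    rw [hd, hξ']
    rw [hξ'] at hv
    have hδc : (δ:ℂ) ≠ 0 := by exact_mod_cast hδpos.ne'
    field_simp
    ring
  have keyw : c/((ξ - ((x:ℝ):ℂ))^2) - c/((ξ - ((x:ℝ):ℂ))*(ξ' - ((x:ℝ):ℂ)))
      = c * (Complex.I * δ) / ((ξ - ((x:ℝ):ℂ))^2 * (ξ' - ((x:ℝ):ℂ))) := by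
    rw [hξ']
    rw [hξ'] at hv
    field_simp
    ring
  have happ : sqKernelFun K ξ c h x - (kernelFun K ξ d h + kernelFun K ξ' (-d) him') x
      = (c * (Complex.I * δ) / ((ξ - ((x:ℝ):ℂ))^2 * (ξ' - ((x:ℝ):ℂ)))).re := by
    rw [← keyw]
    have : (kernelFun K ξ d h + kernelFun K ξ' (-d) him') x
        = (d/(ξ - ((x:ℝ):ℂ)) + (-d)/(ξ' - ((x:ℝ):ℂ))).re := by
      simp [kernelFun_apply, Complex.add_re]
    rw [this, keyc, sqKernelFun_apply, ← Complex.sub_re]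
  rw [Real.dist_eq, happ]
  have h3 := Complex.abs_re_le_norm (c * (Complex.I * δ) / ((ξ - ((x:ℝ):ℂ))^2 * (ξ' - ((x:ℝ):ℂ))))
  have h4 : ‖(c * (Complex.I * δ) / ((ξ - ((x:ℝ):ℂ))^2 * (ξ' - ((x:ℝ):ℂ))))‖
      = A * δ / ((‖(ξ - ((x:ℝ):ℂ))‖)^2 * ‖(ξ' - ((x:ℝ):ℂ))‖) := by
    simp [norm_div, norm_mul, norm_pow, hA, Complex.norm_I, Complex.norm_real, abs_of_pos hδpos]
  have h5 : b ≤ ‖(ξ - ((x:ℝ):ℂ))‖ := by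
    have := Complex.abs_im_le_norm (ξ - ((x:ℝ):ℂ))
    simpa [Complex.sub_im, ← hb, abs_of_pos hbpos] using this
  have h6 : b ≤ ‖(ξ' - ((x:ℝ):ℂ))‖ := by
    have h7 := Complex.abs_im_le_norm (ξ' - ((x:ℝ):ℂ))
    have h8 : (ξ' - ((x:ℝ):ℂ)).im = b + δ := by
      simp [hξ', Complex.add_im, Complex.sub_im, ← hb]
    rw [h8, abs_of_pos (by linarith)] at h7
    linarith
  have h9 : A * δ / ((‖(ξ - ((x:ℝ):ℂ))‖)^2 * ‖(ξ' - ((x:ℝ):ℂ))‖)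
      ≤ A * δ / (b^2 * b) := by
    gcongr
  have hδA : δ * (A + 1) = ε * b^3 := by
    rw [hδ]; field_simp
  have h10 : A * δ / (b^2 * b) < ε := by
    rw [div_lt_iff₀ (by positivity)]
    nlinarith [hδpos, hA ▸ norm_nonneg c]
  calc |(c * (Complex.I * δ) / ((ξ - ((x:ℝ):ℂ))^2 * (ξ' - ((x:ℝ):ℂ)))).re| ≤ _ := h3
    _ = _ := h4
    _ ≤ A * δ / (b^2 * b) := h9
    _ < ε := h10

end CauchyApprox

namespace CauchyApprox
open Complex
variable (K : Set ℝ)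

lemma conj_kernel (mu η : ℂ) (x : ℝ) :
    (starRingEnd ℂ) (mu/(η - (x:ℂ))) = (starRingEnd ℂ) mu / ((starRingEnd ℂ) η - (x:ℂ)) := by
  simp [map_div₀, map_sub, Complex.conj_ofReal]

lemma key_identity_ne (lam mu ξ η : ℂ) (x : ℝ) (hξ : 0 < ξ.im) (hη : 0 < η.im) (hne : ξ ≠ η) :
    (lam/(ξ - (x:ℂ))).re * (mu/(η - (x:ℂ))).re
      = (((lam*mu/(η-ξ) + lam*((starRingEnd ℂ) mu)/((starRingEnd ℂ) η-ξ))/2)/(ξ - (x:ℂ))).re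
        + (((-(lam*mu/(η-ξ)) + (starRingEnd ℂ) (-(lam*((starRingEnd ℂ) mu)/((starRingEnd ℂ) η-ξ))))/2)/(η - (x:ℂ))).re := by
  have hu : ξ - (x:ℂ) ≠ 0 := denom_ne _ _ hξ.ne'
  have hv : η - (x:ℂ) ≠ 0 := denom_ne _ _ hη.ne'
  have hvc : (starRingEnd ℂ) η - (x:ℂ) ≠ 0 := by
    refine denom_ne _ _ ?_
    simp only [Complex.conj_im]
    linarith
  have hne1 : η - ξ ≠ 0 := sub_ne_zero.mpr (Ne.symm hne)
  have hne2 : (starRingEnd ℂ) η - ξ ≠ 0 := by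
    intro h0
    have := congrArg Complex.im h0
    simp [Complex.sub_im, Complex.conj_im] at this
    linarith
  rw [re_mul_re, conj_kernel]
  have m1 : lam/(ξ - (x:ℂ)) * (mu/(η - (x:ℂ)))
      = (lam*mu/(η-ξ))/(ξ - (x:ℂ)) + (-(lam*mu/(η-ξ)))/(η - (x:ℂ)) := by
    rw [div_mul_div_comm]
    exact partial_frac _ _ _ _ hu hv hne1
  have m2 : lam/(ξ - (x:ℂ)) * ((starRingEnd ℂ) mu/((starRingEnd ℂ) η - (x:ℂ)))
      = (lam*((starRingEnd ℂ) mu)/((starRingEnd ℂ) η-ξ))/(ξ - (x:ℂ))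
        + (-(lam*((starRingEnd ℂ) mu)/((starRingEnd ℂ) η-ξ)))/((starRingEnd ℂ) η - (x:ℂ)) := by
    rw [div_mul_div_comm]
    exact partial_frac _ _ _ _ hu hvc hne2
  rw [m1, m2, Complex.add_re, Complex.add_re, re_reflect]
  have r1 : ((lam*mu/(η-ξ) + lam*((starRingEnd ℂ) mu)/((starRingEnd ℂ) η-ξ))/2)/(ξ - (x:ℂ))
      = ((lam*mu/(η-ξ))/(ξ - (x:ℂ)) + (lam*((starRingEnd ℂ) mu)/((starRingEnd ℂ) η-ξ))/(ξ - (x:ℂ)))/2 := by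
    ring
  have r2 : ((-(lam*mu/(η-ξ)) + (starRingEnd ℂ) (-(lam*((starRingEnd ℂ) mu)/((starRingEnd ℂ) η-ξ))))/2)/(η - (x:ℂ))
      = ((-(lam*mu/(η-ξ)))/(η - (x:ℂ)) + ((starRingEnd ℂ) (-(lam*((starRingEnd ℂ) mu)/((starRingEnd ℂ) η-ξ))))/(η - (x:ℂ)))/2 := by
    ring
  rw [r1, r2, re_div_two, re_div_two, Complex.add_re, Complex.add_re]
  ring

lemma key_identity_eq (lam mu ξ : ℂ) (x : ℝ) (hξ : 0 < ξ.im) :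
    (lam/(ξ - (x:ℂ))).re * (mu/(ξ - (x:ℂ))).re
      = ((lam*mu/2)/((ξ - (x:ℂ))^2)).re
        + (((lam*((starRingEnd ℂ) mu)/((starRingEnd ℂ) ξ-ξ)
            + (starRingEnd ℂ) (-(lam*((starRingEnd ℂ) mu)/((starRingEnd ℂ) ξ-ξ))))/2)/(ξ - (x:ℂ))).re := by
  have hu : ξ - (x:ℂ) ≠ 0 := denom_ne _ _ hξ.ne'
  have hvc : (starRingEnd ℂ) ξ - (x:ℂ) ≠ 0 := by
    refine denom_ne _ _ ?_
    simp only [Complex.conj_im]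
    linarith
  have hne2 : (starRingEnd ℂ) ξ - ξ ≠ 0 := by
    intro h0
    have := congrArg Complex.im h0
    simp [Complex.sub_im, Complex.conj_im] at this
    linarith
  rw [re_mul_re, conj_kernel]
  have m1 : lam/(ξ - (x:ℂ)) * (mu/(ξ - (x:ℂ))) = (lam*mu)/((ξ - (x:ℂ))^2) := by
    rw [div_mul_div_comm, sq]
  have m2 : lam/(ξ - (x:ℂ)) * ((starRingEnd ℂ) mu/((starRingEnd ℂ) ξ - (x:ℂ)))
      = (lam*((starRingEnd ℂ) mu)/((starRingEnd ℂ) ξ-ξ))/(ξ - (x:ℂ))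
        + (-(lam*((starRingEnd ℂ) mu)/((starRingEnd ℂ) ξ-ξ)))/((starRingEnd ℂ) ξ - (x:ℂ)) := by
    rw [div_mul_div_comm]
    exact partial_frac _ _ _ _ hu hvc hne2
  rw [m1, m2, Complex.add_re, re_reflect]
  have r1 : (lam*mu/2)/((ξ - (x:ℂ))^2) = ((lam*mu)/((ξ - (x:ℂ))^2))/2 := by ring
  have r2 : (((lam*((starRingEnd ℂ) mu)/((starRingEnd ℂ) ξ-ξ)
      + (starRingEnd ℂ) (-(lam*((starRingEnd ℂ) mu)/((starRingEnd ℂ) ξ-ξ))))/2)/(ξ - (x:ℂ)))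
      = ((lam*((starRingEnd ℂ) mu)/((starRingEnd ℂ) ξ-ξ))/(ξ - (x:ℂ))
        + ((starRingEnd ℂ) (-(lam*((starRingEnd ℂ) mu)/((starRingEnd ℂ) ξ-ξ))))/(ξ - (x:ℂ)))/2 := by
    ring
  rw [r1, r2, re_div_two, re_div_two, Complex.add_re]
  ring

variable [CompactSpace K]

lemma mul_single_mem_closure (ξ η lam mu : ℂ) (h1 : 0 < ξ.im) (h2 : 0 < η.im) :
    kernelFun K ξ lam h1 * kernelFun K η mu h2 ∈ closure (kernelSet K) := by
  by_cases hne : ξ = η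
  · subst hne
    have hrep : kernelFun K ξ lam h1 * kernelFun K ξ mu h2
        = sqKernelFun K ξ (lam*mu/2) h1
          + kernelFun K ξ ((lam*((starRingEnd ℂ) mu)/((starRingEnd ℂ) ξ-ξ)
            + (starRingEnd ℂ) (-(lam*((starRingEnd ℂ) mu)/((starRingEnd ℂ) ξ-ξ))))/2) h1 := by
      ext x
      simp only [ContinuousMap.mul_apply, ContinuousMap.add_apply, kernelFun_apply,
        sqKernelFun_apply]
      exact key_identity_eq lam mu ξ x h1
    rw [hrep]
    exact closure_add K (sq_mem_closure K _ _ _) (subset_closure (kernelFun_mem K _ _ _))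
  · refine subset_closure ?_
    refine ⟨2, ![ξ, η],
      ![(lam*mu/(η-ξ) + lam*((starRingEnd ℂ) mu)/((starRingEnd ℂ) η-ξ))/2,
        (-(lam*mu/(η-ξ)) + (starRingEnd ℂ) (-(lam*((starRingEnd ℂ) mu)/((starRingEnd ℂ) η-ξ))))/2], ?_, ?_⟩
    · intro k
      fin_cases k <;> simpa using by assumption
    · intro x
      rw [Fin.sum_univ_two]
      simp only [ContinuousMap.mul_apply, kernelFun_apply, Matrix.cons_val_zero,
        Matrix.cons_val_one, Matrix.head_cons, Complex.add_re]
      rw [key_identity_ne lam mu ξ η x h1 h2 hne]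

lemma closure_mul {g h : C(K, ℝ)} (hg : g ∈ closure (kernelSet K))
    (hh : h ∈ closure (kernelSet K)) : g * h ∈ closure (kernelSet K) := by
  have base : ∀ a ∈ kernelSet K, ∀ b ∈ kernelSet K, a * b ∈ closure (kernelSet K) := by
    intro a ha b hb
    obtain ⟨m, ξ, lam, him, rfl⟩ := mem_iff_sum K ha
    obtain ⟨n, η, mu, him', rfl⟩ := mem_iff_sum K hb
    rw [Finset.sum_mul_sum]
    refine closure_sum K _ _ (fun i _ => closure_sum K _ _ (fun j _ => ?_))
    exact mul_single_mem_closure K _ _ _ _ _ _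
  have hp : (g, h) ∈ closure (kernelSet K ×ˢ kernelSet K) := by
    rw [closure_prod_eq]; exact ⟨hg, hh⟩
  have hcont : Continuous (fun p : C(K, ℝ) × C(K, ℝ) => p.1 * p.2) := continuous_mul
  have hm : (fun p : C(K, ℝ) × C(K, ℝ) => p.1 * p.2) (g, h) ∈
      closure ((fun p : C(K, ℝ) × C(K, ℝ) => p.1 * p.2) '' (kernelSet K ×ˢ kernelSet K)) :=
    image_closure_subset_closure_image hcont ⟨(g, h), hp, rfl⟩
  refine closure_minimal ?_ isClosed_closure hm
  rintro _ ⟨⟨a, b⟩, ⟨ha, hb⟩, rfl⟩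
  exact base a ha b hb

end CauchyApprox

namespace CauchyApprox
open Complex
variable (K : Set ℝ) [CompactSpace K]

noncomputable def kernelAlg : Subalgebra ℝ C(K, ℝ) where
  carrier := closure (kernelSet K)
  mul_mem' := closure_mul K
  add_mem' := closure_add K
  one_mem' := by
    have := const_mem_closure K 1
    simpa using this
  zero_mem' := subset_closure (zero_mem K)
  algebraMap_mem' := fun r => by
    have he : algebraMap ℝ C(K, ℝ) r = ContinuousMap.const K r := by ext x; simp
    rw [he]
    exact const_mem_closure K r

lemma kernelAlg_separates : (kernelAlg K).SeparatesPoints := by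
  intro x y hxy
  have hxyr : (x:ℝ) ≠ (y:ℝ) := fun h => hxy (Subtype.ext h)
  have him : (0:ℝ) < (((x:ℝ):ℂ) + Complex.I).im := by simp
  refine ⟨_, ⟨kernelFun K (((x:ℝ):ℂ) + Complex.I) 1 him,
    subset_closure (kernelFun_mem K _ _ _), rfl⟩, ?_⟩
  show kernelFun K (((x:ℝ):ℂ) + Complex.I) 1 him x ≠ kernelFun K (((x:ℝ):ℂ) + Complex.I) 1 him y
  rw [kernelFun_apply, kernelFun_apply]
  have e1 : (((x:ℝ):ℂ) + Complex.I - ((x:ℝ):ℂ)) = Complex.I := by ring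
  have hx0 : ((1:ℂ) / (((x:ℝ):ℂ) + Complex.I - ((x:ℝ):ℂ))).re = 0 := by
    rw [e1]
    simp
  set z : ℂ := ((x:ℝ):ℂ) + Complex.I - ((y:ℝ):ℂ) with hz
  have hzre : z.re = (x:ℝ) - (y:ℝ) := by simp [hz]
  have hzne : z ≠ 0 := by
    intro h0
    have := congrArg Complex.re h0
    rw [hzre] at this
    simp at this
    exact hxyr (by linarith)
  have hy0 : ((1:ℂ) / z).re ≠ 0 := by
    rw [one_div, Complex.inv_re, hzre]
    exact div_ne_zero (sub_ne_zero.mpr hxyr) (Complex.normSq_pos.mpr hzne).ne'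
  rw [hx0]
  exact fun h => hy0 h.symm

end CauchyApprox

open CauchyApprox in
/-- **Real one-variable Cauchy approximation.** A function real-analytic on
an open `Ω ⊆ ℝ` can be uniformly approximated on a compact `K ⊆ Ω` by the
real part of finite combinations of one-variable Cauchy kernels with poles
in the upper half-plane. -/
theorem real_cauchy_approximation_one_variable
    (Ω : Set ℝ) (hΩ : IsOpen Ω)
    (f : ℝ → ℝ) (hf : AnalyticOnNhd ℝ f Ω)
    (K : Set ℝ) (hK : IsCompact K) (hKΩ : K ⊆ Ω) :
    ∀ ε > 0, ∃ m : ℕ, 1 ≤ m ∧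
      ∃ (ξ : Fin m → ℂ) (lam : Fin m → ℂ),
        (∀ k, 0 < (ξ k).im) ∧
        ∀ x ∈ K, |f x - (∑ k, lam k / (ξ k - (x : ℂ))).re| < ε := by
  intro ε hε
  haveI : CompactSpace K := isCompact_iff_compactSpace.mp hK
  have hfc : Continuous (K.restrict f) := (hf.continuousOn.mono hKΩ).restrict
  set F : C(K, ℝ) := ⟨K.restrict f, hfc⟩ with hF
  have htop := ContinuousMap.subalgebra_topologicalClosure_eq_top_of_separatesPoints
    (kernelAlg K) (kernelAlg_separates K)
  have hFmem : F ∈ closure (kernelSet K) := by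
    have h1 : F ∈ (kernelAlg K).topologicalClosure := by
      rw [htop]; exact Algebra.mem_top
    have h2 : F ∈ closure ((kernelAlg K : Set C(K, ℝ))) := by
      rw [← Subalgebra.topologicalClosure_coe]
      exact h1
    have h3 : ((kernelAlg K : Set C(K, ℝ))) = closure (kernelSet K) := rfl
    rw [h3, closure_closure] at h2
    exact h2
  rw [Metric.mem_closure_iff] at hFmem
  obtain ⟨g, hgS, hdist⟩ := hFmem ε hε
  obtain ⟨m, ξ, lam, him, hgx⟩ := hgS
  refine ⟨m+1, Nat.succ_le_succ (Nat.zero_le m), (Fin.cons Complex.I ξ : Fin (m+1) → ℂ), (Fin.cons 0 lam : Fin (m+1) → ℂ), ?_, ?_⟩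
  · intro k
    refine Fin.cases ?_ (fun i => ?_) k
    · simp
    · simpa using him i
  · intro x hx
    have h1 : dist (F ⟨x,hx⟩) (g ⟨x,hx⟩) ≤ dist F g := ContinuousMap.dist_apply_le_dist _
    have hsum : (∑ k : Fin (m+1), (Fin.cons 0 lam : Fin (m+1) → ℂ) k / ((Fin.cons Complex.I ξ : Fin (m+1) → ℂ) k - (x : ℂ)))
        = ∑ k : Fin m, lam k / (ξ k - (x : ℂ)) := by
      rw [Fin.sum_univ_succ]
      simp
    rw [hsum]
    have h2 : f x - (∑ k : Fin m, lam k / (ξ k - (x:ℂ))).re = F ⟨x,hx⟩ - g ⟨x,hx⟩ := by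
      rw [hgx ⟨x,hx⟩]
      rfl
    rw [h2, ← Real.dist_eq]
    exact lt_of_le_of_lt h1 hdist
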